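/- Fix n ≥ 1 and index ranges α,β,γ,δ ∈ {1,…,n} with repeated indices summed. Let E be the real vector space with basis {Y_0, Y_α, U_α} (dimension 2n+1) and dual basis {Y⁰, Yᵅ, Uᵅ}. Given real numbers t_{αβ} with t_{αβ} = −t_{βα}, g_α, and hᵅ, define the alternating bilinear form Ω = Yᵅ∧Uᵅ + ½ t_{αβ} Yᵅ∧Yᵝ + g_α Yᵅ∧Y⁰ + hᵅ Uᵅ∧Y⁰ and the linear form η = Y⁰. Then ker Ω ∩ ker η = {0}, and the unique R ∈ E with Ω(R,·) = 0 and η(R) = 1 is R = Y_0 + hᵅ Y_α + r_α U_α with r_α = −g_α + t_{βα} hᵝ. (With t_{αβ} = C^γ_{αβ} y_γ, g_α = ρ^i_α ∂H/∂x^i − C^γ_{0α} y_γ and hᵅ = ∂H/∂y_α, this is the pointwise statement that the pair (Ω_h, η) associated with a Hamiltonian section h on a Lie affgebroid is cosymplectic and that the components of its Reeb section give the Hamilton equations dx^i/dt = ρ^i_0 + ρ^i_α ∂H/∂y_α, dy_α/dt = −ρ^i_α ∂H/∂x^i + y_γ(C^γ_{0α} + C^γ_{βα} ∂H/∂y_β).)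 -/
import Mathlib


/-- On the `(2n+1)`-dimensional space `E` with basis `{Y₀, Y_α, U_α}`
(modeled here as `ℝ × (Fin n → ℝ) × (Fin n → ℝ)`, the three components being the
coordinates w.r.t. `Y₀`, the `Y_α` and the `U_α`), given `t_{αβ} = -t_{βα}`, `g_α`, `hᵅ`,
the pair `(Ω, η)` with
`Ω = Yᵅ∧Uᵅ + ½ t_{αβ} Yᵅ∧Yᵝ + g_α Yᵅ∧Y⁰ + hᵅ Uᵅ∧Y⁰` and `η = Y⁰`
satisfies `ker Ω ∩ ker η = {0}`, and the unique `R` with `Ω(R,·) = 0`, `η(R) = 1` is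
`R = Y₀ + hᵅ Y_α + r_α U_α` with `r_α = -g_α + t_{βα} hᵝ`. -/
theorem stmt_5 (n : ℕ) (hn : 1 ≤ n)
    (t : Fin n → Fin n → ℝ) (ht : ∀ α β, t α β = - t β α)
    (g h : Fin n → ℝ)
    (Ω : (ℝ × (Fin n → ℝ) × (Fin n → ℝ)) → (ℝ × (Fin n → ℝ) × (Fin n → ℝ)) → ℝ)
    (hΩ : ∀ u v, Ω u v =
      (∑ α, (u.2.1 α * v.2.2 α - v.2.1 α * u.2.2 α))
      + (1 / 2) * (∑ α, ∑ β, t α β * (u.2.1 α * v.2.1 β - v.2.1 α * u.2.1 β))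
      + (∑ α, g α * (u.2.1 α * v.1 - v.2.1 α * u.1))
      + (∑ α, h α * (u.2.2 α * v.1 - v.2.2 α * u.1)))
    (η : (ℝ × (Fin n → ℝ) × (Fin n → ℝ)) → ℝ) (hη : ∀ u, η u = u.1) :
    (∀ u, (∀ v, Ω u v = 0) → η u = 0 → u = 0) ∧
    (∀ u, ((∀ v, Ω u v = 0) ∧ η u = 1) ↔
      u = ((1 : ℝ), h, fun α => - g α + ∑ β, t β α * h β)) := by
  have key : ∀ (a b : Fin n → ℝ),
      (∑ α, ∑ β, t α β * (a α * b β)) = - ∑ α, ∑ β, t α β * (b α * a β) := by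
    intro a b
    have e : ∀ α β, t α β * (b α * a β) = -(t β α * (a β * b α)) := fun α β => by
      rw [ht α β]; ring
    simp_rw [e, Finset.sum_neg_distrib, neg_neg]
    rw [Finset.sum_comm]
  -- extraction of the component equations from Ω u · = 0
  have ext : ∀ u : ℝ × (Fin n → ℝ) × (Fin n → ℝ), (∀ v, Ω u v = 0) →
      (∀ γ, u.2.1 γ = h γ * u.1) ∧
      (∀ γ, u.2.2 γ = (∑ α, t α γ * u.2.1 α) - g γ * u.1) := by
    intro u H
    simp only [hΩ] at H
    constructor
    · intro γ
      have := H (0, 0, Pi.single γ 1)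
      simp [Pi.single_apply, mul_ite, Finset.sum_ite_eq'] at this
      linarith
    · intro γ
      have := H (0, Pi.single γ 1, 0)
      simp [Pi.single_apply, mul_ite, mul_sub, sub_mul, Finset.sum_sub_distrib,
        Finset.mul_sum, Finset.sum_ite_eq', Finset.sum_ite_eq] at this
      simp_rw [ht γ, neg_mul, mul_neg, Finset.sum_neg_distrib, ← Finset.mul_sum] at this
      linarith
  refine ⟨?_, ?_⟩
  · intro u H h0
    rw [hη] at h0
    obtain ⟨e1, e2⟩ := ext u H
    have p1 : u.2.1 = 0 := funext fun γ => by simp [e1 γ, h0]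
    have p2 : u.2.2 = 0 := funext fun γ => by simp [e2 γ, h0, p1]
    rw [Prod.ext_iff, Prod.ext_iff]
    exact ⟨h0, p1, p2⟩
  · intro u
    constructor
    · rintro ⟨H, h1⟩
      rw [hη] at h1
      obtain ⟨e1, e2⟩ := ext u H
      rw [Prod.ext_iff, Prod.ext_iff]
      refine ⟨h1, funext fun γ => by simp [e1 γ, h1], funext fun γ => ?_⟩
      have := e2 γ
      simp only [e1, h1, mul_one] at this
      rw [this]; ring
    · rintro rfl
      refine ⟨fun v => ?_, by rw [hη]⟩
      rw [hΩ]
      show (∑ α, (h α * v.2.2 α - v.2.1 α * (- g α + ∑ β, t β α * h β)))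
        + (1 / 2) * (∑ α, ∑ β, t α β * (h α * v.2.1 β - v.2.1 α * h β))
        + (∑ α, g α * (h α * v.1 - v.2.1 α * 1))
        + (∑ α, h α * ((- g α + ∑ β, t β α * h β) * v.1 - v.2.2 α * 1)) = 0
      simp only [mul_sub, sub_mul, mul_one, mul_add, add_mul, neg_mul, mul_neg,
        Finset.sum_sub_distrib, Finset.sum_add_distrib, Finset.sum_neg_distrib, Finset.mul_sum]
      have h3 : (∑ x, ∑ i, v.2.1 x * (t i x * h i)) = ∑ α, ∑ β, t α β * (h α * v.2.1 β) := by
        rw [Finset.sum_comm]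
        exact Finset.sum_congr rfl fun α _ => Finset.sum_congr rfl fun β _ => by ring
      have h4 : (∑ x : Fin n, ∑ i : Fin n, 1 / 2 * (t x i * (h x * v.2.1 i)))
          = 1 / 2 * ∑ α, ∑ β, t α β * (h α * v.2.1 β) := by
        simp_rw [← Finset.mul_sum]
      have h5 : (∑ x : Fin n, ∑ i : Fin n, 1 / 2 * (t x i * (v.2.1 x * h i)))
          = -(1 / 2) * ∑ α, ∑ β, t α β * (h α * v.2.1 β) := by
        simp_rw [← Finset.mul_sum]
        rw [key v.2.1 h]; ring
      have hK : (∑ α, ∑ β, t α β * (h α * h β)) = 0 := by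
        have := key h h; linarith
      have h8 : (∑ x, h x * ((∑ β, t β x * h β) * v.1)) = 0 := by
        have e : ∀ x, h x * ((∑ β, t β x * h β) * v.1)
            = (∑ β, t β x * (h β * h x)) * v.1 := fun x => by
          rw [Finset.sum_mul, Finset.sum_mul, Finset.mul_sum]
          exact Finset.sum_congr rfl fun β _ => by ring
        simp_rw [e, ← Finset.sum_mul]
        rw [Finset.sum_comm, hK, zero_mul]
      have h9 : (∑ x, v.2.1 x * g x) = ∑ x, g x * v.2.1 x :=
        Finset.sum_congr rfl fun x _ => by ring
      have h10 : (∑ x, h x * (g x * v.1)) = ∑ x, g x * (h x * v.1) :=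
        Finset.sum_congr rfl fun x _ => by ring
      linarith
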